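/- arXiv:2310.10580 — 2 statements merged into one kernel-verified Lean document; each statement's English description precedes it below -/
import Mathlib

section
/- Let E be a connected directed graph, A = KE its path algebra over a field K, and T a centralizer of A (i.e., a K-linear map T: A → A with T(xy) = T(x)y = xT(y) for all x, y ∈ A). If there exists a vertex u ∈ E^0 and a scalar k ∈ K with T(u) = ku, then T = k·Id on A. -/
/-- A directed graph: vertices, edges, source and range maps. -/
structure DGraph : Type 1 where
  V : Type
  Edge : Type
  s : Edge → V
  r : Edge → V

namespace DGraph

/-- A list of edges is composable if consecutive edges match up. -/
def IsComposable (G : DGraph) (l : List G.Edge) : Prop :=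
  l.Chain' (fun e f => G.r e = G.s f)

/-- A path in `G`: either a trivial path at a vertex, or a nonempty composable list of edges. -/
def GPath (G : DGraph) : Type :=
  G.V ⊕ {l : List G.Edge // l ≠ [] ∧ G.IsComposable l}

namespace GPath

variable {G : DGraph}

/-- The source of a path. -/
def src : GPath G → G.V
  | Sum.inl v => v
  | Sum.inr l => G.s (l.1.head l.2.1)

/-- The range of a path. -/
def rng : GPath G → G.V
  | Sum.inl v => v
  | Sum.inr l => G.r (l.1.getLast l.2.1)

/-- The length of a path. -/
def length : GPath G → ℕ
  | Sum.inl _ => 0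
  | Sum.inr l => l.1.length

/-- The trivial path at a vertex. -/
def ofVertex (v : G.V) : GPath G := Sum.inl v

/-- The length-one path given by an edge. -/
def ofEdge (e : G.Edge) : GPath G :=
  Sum.inr ⟨[e], ⟨by simp, List.isChain_singleton _⟩⟩

/-- Concatenation of composable paths. -/
def comp : (p q : GPath G) → p.rng = q.src → GPath G
  | Sum.inl _, q, _ => q
  | Sum.inr l, Sum.inl _, _ => Sum.inr l
  | Sum.inr l, Sum.inr m, h => Sum.inr ⟨l.1 ++ m.1, by
      refine ⟨by simp [l.2.1], l.2.2.append m.2.2 ?_⟩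
      intro x hx y hy
      rw [List.getLast?_eq_some_getLast l.2.1] at hx
      rw [List.head?_eq_head m.2.1] at hy
      cases hx
      cases hy
      exact h⟩

end GPath

end DGraph

open DGraph

/-- A realization of the path algebra of the graph `G` over the field `K`:
a `K`-algebra with a basis indexed by the paths of `G`, multiplying by concatenation. -/
structure PathAlgebraOn (K : Type) [Field K] (G : DGraph) (A : Type)
    [NonUnitalRing A] [Module K A] where
  basis : Module.Basis (GPath G) K A
  mul_comp : ∀ (p q : GPath G) (h : p.rng = q.src),
      basis p * basis q = basis (p.comp q h)
  mul_ncomp : ∀ p q : GPath G, p.rng ≠ q.src → basis p * basis q = 0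

/-- Adjacency in the underlying undirected graph. -/
def DGraph.Adj (G : DGraph) (u v : G.V) : Prop :=
  ∃ e : G.Edge, (G.s e = u ∧ G.r e = v) ∨ (G.s e = v ∧ G.r e = u)

/-- A graph is connected if its underlying undirected graph is connected. -/
def DGraph.Connected (G : DGraph) : Prop :=
  ∀ u v : G.V, Relation.ReflTransGen G.Adj u v

set_option linter.unusedSectionVars false

noncomputable section AuxStmt4

open DGraph GPath

variable {G : DGraph}

open Classical in
/-- Remove a first edge `e` from a path, if possible. -/
def unpre (e : G.Edge) : GPath G → Option (GPath G)
  | Sum.inl _ => none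
  | Sum.inr ⟨[], _⟩ => none
  | Sum.inr ⟨[f], _⟩ => if f = e then some (Sum.inl (G.r e)) else none
  | Sum.inr ⟨f :: g :: rs, h⟩ =>
      if f = e then some (Sum.inr ⟨g :: rs, List.cons_ne_nil _ _, List.IsChain.tail h.2⟩)
      else none

open Classical in
/-- Remove a last edge `e` from a path, if possible. -/
def unapp (e : G.Edge) : GPath G → Option (GPath G)
  | Sum.inl _ => none
  | Sum.inr ⟨l, hl⟩ =>
    if l.getLast hl.1 = e then
      if hd : l.dropLast = [] then some (Sum.inl (G.s e))
      else some (Sum.inr ⟨l.dropLast, hd, List.IsChain.prefix hl.2 (List.dropLast_prefix l)⟩)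
    else none

lemma unpre_comp (e : G.Edge) (p : GPath G) (h : (ofEdge e : GPath G).rng = p.src) :
    unpre e ((ofEdge e : GPath G).comp p h) = some p := by
  cases p with
  | inl w =>
    have hw : G.r e = w := h
    simp [ofEdge, GPath.comp, unpre, hw]
  | inr l =>
    obtain ⟨l, hne, hc⟩ := l
    cases l with
    | nil => exact absurd rfl hne
    | cons g rs => simp [ofEdge, GPath.comp, unpre]

lemma unapp_comp (e : G.Edge) (p : GPath G) (h : p.rng = (ofEdge e : GPath G).src) :
    unapp e (p.comp (ofEdge e : GPath G) h) = some p := by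
  cases p with
  | inl w =>
    have hw : w = G.s e := h
    simp [ofEdge, GPath.comp, unapp, hw]
  | inr l =>
    obtain ⟨l, hne, hc⟩ := l
    simp [ofEdge, GPath.comp, unapp, List.getLast_concat, List.dropLast_concat, hne]

variable {K : Type} [Field K] {A : Type} [NonUnitalRing A] [Module K A]
  [SMulCommClass K A A] [IsScalarTower K A A]

lemma cancel_left (PA : PathAlgebraOn K G A) (e : G.Edge) (x : A)
    (hx : PA.basis (ofVertex (G.r e)) * x = x)
    (h0 : PA.basis (ofEdge e) * x = 0) : x = 0 := by
  classical
  let R : A →ₗ[K] A := PA.basis.constr K fun q => (unpre e q).elim 0 fun p => PA.basis p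
  have key : R ∘ₗ LinearMap.mulLeft K (PA.basis (ofEdge e)) =
      LinearMap.mulLeft K (PA.basis (ofVertex (G.r e))) := by
    apply PA.basis.ext
    intro p
    simp only [LinearMap.comp_apply, LinearMap.mulLeft_apply]
    by_cases h : (ofEdge e : GPath G).rng = p.src
    · rw [PA.mul_comp _ _ h]
      have h' : (ofVertex (G.r e) : GPath G).rng = p.src := h
      rw [PA.mul_comp _ _ h']
      show (PA.basis.constr K fun q => (unpre e q).elim 0 fun p => PA.basis p) _ = _
      rw [Module.Basis.constr_basis, unpre_comp e p h]
      rfl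
    · rw [PA.mul_ncomp _ _ h, map_zero]
      have h' : (ofVertex (G.r e) : GPath G).rng ≠ p.src := h
      rw [PA.mul_ncomp _ _ h']
  have := LinearMap.congr_fun key x
  simp only [LinearMap.comp_apply, LinearMap.mulLeft_apply] at this
  rw [h0, map_zero] at this
  rw [← hx]
  exact this.symm

lemma cancel_right (PA : PathAlgebraOn K G A) (e : G.Edge) (x : A)
    (hx : x * PA.basis (ofVertex (G.s e)) = x)
    (h0 : x * PA.basis (ofEdge e) = 0) : x = 0 := by
  classical
  let R : A →ₗ[K] A := PA.basis.constr K fun q => (unapp e q).elim 0 fun p => PA.basis p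
  have key : R ∘ₗ LinearMap.mulRight K (PA.basis (ofEdge e)) =
      LinearMap.mulRight K (PA.basis (ofVertex (G.s e))) := by
    apply PA.basis.ext
    intro p
    simp only [LinearMap.comp_apply, LinearMap.mulRight_apply]
    by_cases h : p.rng = (ofEdge e : GPath G).src
    · rw [PA.mul_comp _ _ h]
      have h' : p.rng = (ofVertex (G.s e) : GPath G).src := h
      rw [PA.mul_comp _ _ h']
      show (PA.basis.constr K fun q => (unapp e q).elim 0 fun p => PA.basis p) _ = _
      rw [Module.Basis.constr_basis, unapp_comp e p h]
      cases p with
      | inl w =>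
        have hw : w = G.s e := h'
        cases hw
        rfl
      | inr l => rfl
    · rw [PA.mul_ncomp _ _ h, map_zero]
      have h' : p.rng ≠ (ofVertex (G.s e) : GPath G).src := h
      rw [PA.mul_ncomp _ _ h']
  have := LinearMap.congr_fun key x
  simp only [LinearMap.comp_apply, LinearMap.mulRight_apply] at this
  rw [h0, map_zero] at this
  rw [← hx]
  exact this.symm

end AuxStmt4

/-- a centralizer of the path algebra of a connected graph acting as `k•` on
one vertex is `k • Id` everywhere. -/
theorem stmt4 (K : Type) [Field K] (G : DGraph)
    (A : Type) [NonUnitalRing A] [Module K A] [SMulCommClass K A A] [IsScalarTower K A A]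
    (PA : PathAlgebraOn K G A) (hconn : G.Connected)
    (T : A →ₗ[K] A) (hT : ∀ x y : A, T (x * y) = T x * y ∧ T (x * y) = x * T y)
    (u : G.V) (k : K)
    (hu : T (PA.basis (GPath.ofVertex u)) = k • PA.basis (GPath.ofVertex u)) :
    ∀ a : A, T a = k • a := by
  classical
  set S : A →ₗ[K] A := T - k • LinearMap.id with hSdef
  have hSapp : ∀ x : A, S x = T x - k • x := fun x => rfl
  have hS1 : ∀ x y : A, S (x * y) = S x * y := by
    intro x y
    rw [hSapp, hSapp, (hT x y).1, sub_mul, smul_mul_assoc]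
  have hS2 : ∀ x y : A, S (x * y) = x * S y := by
    intro x y
    rw [hSapp, hSapp, (hT x y).2, mul_sub, mul_smul_comm]
  have hSu : S (PA.basis (GPath.ofVertex u)) = 0 := by
    rw [hSapp, hu, sub_self]
  have hvv : ∀ v : G.V, PA.basis (GPath.ofVertex v) * PA.basis (GPath.ofVertex v)
      = PA.basis (GPath.ofVertex v) := fun v =>
    PA.mul_comp (GPath.ofVertex v) (GPath.ofVertex v) rfl
  have hvert : ∀ v : G.V, S (PA.basis (GPath.ofVertex v)) = 0 := by
    intro v
    have h := hconn u v
    induction h with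
    | refl => exact hSu
    | @tail w c _ hadj ih =>
      obtain ⟨e, he | he⟩ := hadj
      · -- s e = w, r e = c
        have hSe : S (PA.basis (GPath.ofEdge e)) = 0 := by
          have hm : PA.basis (GPath.ofVertex (G.s e)) * PA.basis (GPath.ofEdge e)
              = PA.basis (GPath.ofEdge e) :=
            PA.mul_comp (GPath.ofVertex (G.s e)) (GPath.ofEdge e) rfl
          rw [← hm, hS1, he.1, ih, zero_mul]
        refine cancel_left PA e _ ?_ ?_
        · rw [he.2, ← hS2]
          rw [hvv c]
        · rw [← hS2]
          have hm : PA.basis (GPath.ofEdge e) * PA.basis (GPath.ofVertex c)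
              = PA.basis (GPath.ofEdge e) := by
            have h' : (GPath.ofEdge e : GPath G).rng = (GPath.ofVertex c : GPath G).src :=
              he.2
            exact PA.mul_comp _ _ h'
          rw [hm, hSe]
      · -- s e = c, r e = w
        have hSe : S (PA.basis (GPath.ofEdge e)) = 0 := by
          have hm : PA.basis (GPath.ofEdge e) * PA.basis (GPath.ofVertex (G.r e))
              = PA.basis (GPath.ofEdge e) :=
            PA.mul_comp (GPath.ofEdge e) (GPath.ofVertex (G.r e)) rfl
          rw [← hm, hS2, he.2, ih, mul_zero]
        refine cancel_right PA e _ ?_ ?_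
        · rw [he.1, ← hS1]
          rw [hvv c]
        · rw [← hS1]
          have hm : PA.basis (GPath.ofVertex c) * PA.basis (GPath.ofEdge e)
              = PA.basis (GPath.ofEdge e) := by
            have h' : (GPath.ofVertex c : GPath G).rng = (GPath.ofEdge e : GPath G).src :=
              he.1.symm
            exact PA.mul_comp _ _ h'
          rw [hm, hSe]
  have hpath : ∀ p : GPath G, S (PA.basis p) = 0 := by
    intro p
    have hm : PA.basis (GPath.ofVertex p.src) * PA.basis p = PA.basis p :=
      PA.mul_comp (GPath.ofVertex p.src) p rfl
    rw [← hm, hS1, hvert, zero_mul]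
  have hS0 : S = 0 := PA.basis.ext fun p => (hpath p).trans rfl
  intro a
  have h0 : S a = 0 := by rw [hS0]; rfl
  rw [hSapp] at h0
  exact sub_eq_zero.mp h0
end

section
/- Let E be a directed graph and A = KE its path algebra over a field K. Then A is prime if and only if E is strongly connected, i.e., for every pair of vertices u, v ∈ E^0 there exists a path λ with s(λ) = u and r(λ) = v. -/
open DGraph

namespace DGraph.GPath

variable {G : DGraph}

theorem comp_length (p q : GPath G) (h : p.rng = q.src) :
    (p.comp q h).length = p.length + q.length := by
  cases p <;> cases q <;> simp [comp, length]

theorem comp_rng (p q : GPath G) (h : p.rng = q.src) :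
    (p.comp q h).rng = q.rng := by
  cases p with
  | inl u => rfl
  | inr l =>
    cases q with
    | inl v => exact h
    | inr m =>
      show G.r (((l.1 ++ m.1).getLast _)) = _
      rw [List.getLast_append_of_ne_nil (h₂ := m.2.1)]
      rfl

/-- Underlying edge list of a path. -/
def pathList : GPath G → List G.Edge
  | Sum.inl _ => []
  | Sum.inr l => l.1

theorem comp_inj {p q p' q' : GPath G} (h : p.rng = q.src) (h' : p'.rng = q'.src)
    (hlen : p.length = p'.length) (heq : p.comp q h = p'.comp q' h') :
    p = p' ∧ q = q' := by
  cases p with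
  | inl u =>
    cases p' with
    | inl u' =>
      have hq : q = q' := heq
      have hu : u = q.src := h
      have hu' : u' = q'.src := h'
      refine ⟨?_, hq⟩
      rw [hu, hu', hq]
    | inr l' =>
      exfalso
      have : (0 : ℕ) = l'.1.length := hlen
      exact l'.2.1 (List.length_eq_zero_iff.mp this.symm)
  | inr l =>
    cases p' with
    | inl u' =>
      exfalso
      have : l.1.length = (0 : ℕ) := hlen
      exact l.2.1 (List.length_eq_zero_iff.mp this)
    | inr l' =>
      have hlen' : l.1.length = l'.1.length := hlen
      cases q with
      | inl v =>
        cases q' with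
        | inl v' =>
          have h3 : (Sum.inr l : GPath G) = Sum.inr l' := heq
          refine ⟨h3, ?_⟩
          injection h3 with hl
          subst hl
          exact congrArg Sum.inl ((h.symm.trans h') : v = v')
        | inr m' =>
          exfalso
          have h4 : l.1 = l'.1 ++ m'.1 := congrArg pathList heq
          have h5 := congrArg List.length h4
          rw [List.length_append] at h5
          exact m'.2.1 (List.length_eq_zero_iff.mp (by omega))
      | inr m =>
        cases q' with
        | inl v' =>
          exfalso
          have h4 : l.1 ++ m.1 = l'.1 := congrArg pathList heq
          have h5 := congrArg List.length h4
          rw [List.length_append] at h5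
          exact m.2.1 (List.length_eq_zero_iff.mp (by omega))
        | inr m' =>
          have h4 : l.1 ++ m.1 = l'.1 ++ m'.1 := congrArg pathList heq
          obtain ⟨e1, e2⟩ := List.append_inj h4 hlen'
          exact ⟨congrArg Sum.inr (Subtype.ext e1), congrArg Sum.inr (Subtype.ext e2)⟩

end DGraph.GPath


/-- `KE` is prime iff `E` is strongly connected. -/
theorem stmt15 (K : Type) [Field K] (G : DGraph)
    (A : Type) [NonUnitalRing A] [Module K A] [SMulCommClass K A A] [IsScalarTower K A A]
    (PA : PathAlgebraOn K G A) :
    (∀ a b : A, (∀ c : A, a * c * b = 0) → a = 0 ∨ b = 0) ↔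
    (∀ u v : G.V, ∃ p : GPath G, p.src = u ∧ p.rng = v) := by
  constructor
  · -- prime → strongly connected
    intro hprime u v
    by_contra hno
    have hL : ∀ c : A, PA.basis (Sum.inl u) * c * PA.basis (Sum.inl v) = 0 := by
      have hmaps : ((LinearMap.mulRight K (PA.basis (Sum.inl v))).comp
          (LinearMap.mulLeft K (PA.basis (Sum.inl u)))) = 0 := by
        apply PA.basis.ext
        intro p
        simp only [LinearMap.comp_apply, LinearMap.mulLeft_apply, LinearMap.mulRight_apply,
          LinearMap.zero_apply]
        by_cases h1 : GPath.rng (Sum.inl u) = p.src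
        · rw [PA.mul_comp _ _ h1]
          have hcomp : (GPath.comp (Sum.inl u) p h1) = p := rfl
          rw [hcomp]
          by_cases h2 : p.rng = GPath.src (Sum.inl v)
          · exact absurd ⟨p, h1.symm, h2⟩ hno
          · exact PA.mul_ncomp _ _ h2
        · rw [PA.mul_ncomp _ _ h1, zero_mul]
      intro c
      have h7 := congrArg (fun f : A →ₗ[K] A => f c) hmaps
      simpa using h7
    rcases hprime _ _ hL with h | h
    · exact PA.basis.ne_zero _ h
    · exact PA.basis.ne_zero _ h
  · -- strongly connected → prime
    intro hconn a b hab
    classical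
    by_contra hcon
    push_neg at hcon
    obtain ⟨ha, hb⟩ := hcon
    set a' := PA.basis.repr a with ha'def
    set b' := PA.basis.repr b with hb'def
    have haS : a'.support.Nonempty :=
      Finsupp.support_nonempty_iff.mpr (fun h0 => ha (PA.basis.repr.map_eq_zero_iff.mp h0))
    have hbS : b'.support.Nonempty :=
      Finsupp.support_nonempty_iff.mpr (fun h0 => hb (PA.basis.repr.map_eq_zero_iff.mp h0))
    obtain ⟨p₀, hp₀S, hp₀max⟩ := a'.support.exists_max_image GPath.length haS
    obtain ⟨q₀, hq₀S, hq₀max⟩ := b'.support.exists_max_image GPath.length hbS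
    obtain ⟨m, hm1, hm2⟩ := hconn p₀.rng q₀.src
    have h₁ : p₀.rng = m.src := hm1.symm
    have h₂ : (p₀.comp m h₁).rng = q₀.src := by rw [GPath.comp_rng]; exact hm2
    set e₀ := (p₀.comp m h₁).comp q₀ h₂ with he₀
    -- key uniqueness claim
    have key : ∀ p ∈ a'.support, ∀ q ∈ b'.support, ∀ (hpm : p.rng = m.src)
        (hq : (p.comp m hpm).rng = q.src),
        (p.comp m hpm).comp q hq = e₀ → p = p₀ ∧ q = q₀ := by
      intro p hpS q hqS hpm hq hEq
      have hlp := hp₀max p hpS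
      have hlq := hq₀max q hqS
      have hlen := congrArg GPath.length hEq
      rw [he₀, GPath.comp_length, GPath.comp_length, GPath.comp_length, GPath.comp_length]
        at hlen
      have hlp' : p.length = p₀.length := by omega
      have houter : (p.comp m hpm).length = (p₀.comp m h₁).length := by
        rw [GPath.comp_length, GPath.comp_length, hlp']
      obtain ⟨h3, h4⟩ := GPath.comp_inj hq h₂ houter hEq
      obtain ⟨h5, -⟩ := GPath.comp_inj hpm h₁ hlp' h3
      exact ⟨h5, h4⟩
    -- expand a and b in the basis
    have hax : a = ∑ p ∈ a'.support, a' p • PA.basis p := by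
      conv_lhs => rw [← PA.basis.linearCombination_repr a]
      rw [Finsupp.linearCombination_apply, Finsupp.sum]
    have hbx : b = ∑ q ∈ b'.support, b' q • PA.basis q := by
      conv_lhs => rw [← PA.basis.linearCombination_repr b]
      rw [Finsupp.linearCombination_apply, Finsupp.sum]
    have expand : a * PA.basis m * b = ∑ p ∈ a'.support, ∑ q ∈ b'.support,
        (a' p * b' q) • (PA.basis p * PA.basis m * PA.basis q) := by
      conv_lhs => rw [hax, hbx]
      rw [Finset.sum_mul, Finset.sum_mul]
      refine Finset.sum_congr rfl fun p _ => ?_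
      rw [Finset.mul_sum]
      refine Finset.sum_congr rfl fun q _ => ?_
      simp only [smul_mul_assoc, mul_smul_comm, smul_smul]
      rw [mul_comm]
    have h6' : PA.basis.repr (a * PA.basis m * b) e₀ =
        ∑ p ∈ a'.support, ∑ q ∈ b'.support,
          ((a' p * b' q) • PA.basis.repr (PA.basis p * PA.basis m * PA.basis q)) e₀ := by
      rw [expand, map_sum, Finset.sum_apply']
      refine Finset.sum_congr rfl fun p _ => ?_
      rw [map_sum, Finset.sum_apply']
      refine Finset.sum_congr rfl fun q _ => ?_
      rw [map_smul]
    have hterm : ∀ p ∈ a'.support, ∀ q ∈ b'.support, ¬(p = p₀ ∧ q = q₀) →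
        ((a' p * b' q) • PA.basis.repr (PA.basis p * PA.basis m * PA.basis q)) e₀ = 0 := by
      intro p hpS q hqS hne
      rw [Finsupp.smul_apply, smul_eq_mul]
      by_cases hpm : p.rng = m.src
      · rw [PA.mul_comp _ _ hpm]
        by_cases hq : (p.comp m hpm).rng = q.src
        · rw [PA.mul_comp _ _ hq, PA.basis.repr_self, Finsupp.single_apply, if_neg, mul_zero]
          intro hEq
          exact hne (key p hpS q hqS hpm hq hEq)
        · rw [PA.mul_ncomp _ _ hq, map_zero, Finsupp.coe_zero, Pi.zero_apply, mul_zero]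
      · rw [PA.mul_ncomp _ _ hpm, zero_mul, map_zero, Finsupp.coe_zero, Pi.zero_apply, mul_zero]
    have hmain : PA.basis.repr (a * PA.basis m * b) e₀ = a' p₀ * b' q₀ := by
      rw [h6']
      rw [Finset.sum_eq_single_of_mem p₀ hp₀S
        (fun p hp hne => Finset.sum_eq_zero fun q hq =>
          hterm p hp q hq (fun h => hne h.1))]
      rw [Finset.sum_eq_single_of_mem q₀ hq₀S
        (fun q hq hne => hterm p₀ hp₀S q hq (fun h => hne h.2))]
      rw [Finsupp.smul_apply, smul_eq_mul, PA.mul_comp _ _ h₁, PA.mul_comp _ _ h₂,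
        PA.basis.repr_self, Finsupp.single_eq_same, mul_one]
    rw [hab (PA.basis m), map_zero, Finsupp.coe_zero, Pi.zero_apply] at hmain
    exact mul_ne_zero (Finsupp.mem_support_iff.mp hp₀S) (Finsupp.mem_support_iff.mp hq₀S)
      hmain.symm
end
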